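/- Let p be a prime, let x_1, …, x_N ∈ ℤ_p with p-adic discrepancy D_N, and let 0 < s ≤ 1. Then | (1/N²)·#{1 ≤ i ≠ j ≤ N : |x_i − x_j|_p ≤ s} − μ(D_p(0,s)) | ≤ D_N + 2/N. -/

import Mathlib

open MeasureTheory Filter
open scoped Classical

/-- The closed ball `D_p(z,s) = {x ∈ ℤ_p : |x - z|_p ≤ s}`. -/
def padicBall (p : ℕ) [Fact p.Prime] (z : ℤ_[p]) (s : ℝ) : Set ℤ_[p] :=
  {x : ℤ_[p] | ‖x - z‖ ≤ s}

/-- The p-adic discrepancy of the first `N` terms of a sequence `x : ℕ → ℤ_[p]`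
(indexed starting at 1):
`D_N(x) = sup_{z ∈ ℤ_p, k ∈ ℕ} | #{1 ≤ n ≤ N : x_n ∈ D_p(z, p^{-k})}/N - p^{-k} |`. -/
noncomputable def padicDiscrepancy (p : ℕ) [Fact p.Prime] (x : ℕ → ℤ_[p]) (N : ℕ) : ℝ :=
  ⨆ z : ℤ_[p], ⨆ k : ℕ,
    |(((Finset.Icc 1 N).filter fun n =>
        x n ∈ padicBall p z ((p : ℝ) ^ (-(k : ℤ)))).card : ℝ) / N - (p : ℝ) ^ (-(k : ℤ))|

/-- `#{1 ≤ i ≠ j ≤ N : |x_i - x_j|_p ≤ t}`. -/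
noncomputable def pairCount (p : ℕ) [Fact p.Prime] (x : ℕ → ℤ_[p]) (N : ℕ) (t : ℝ) : ℕ :=
  ((Finset.Icc 1 N ×ˢ Finset.Icc 1 N).filter
    fun ij => ij.1 ≠ ij.2 ∧ ‖x ij.1 - x ij.2‖ ≤ t).card

/-- The pair correlation function
`F_{N,α,p}(s) = (1/N²)·(1/μ(D_p(0, s/N^α)))·#{1 ≤ i ≠ j ≤ N : |x_i - x_j|_p ≤ s/N^α}`. -/
noncomputable def pairF (p : ℕ) [Fact p.Prime] [MeasurableSpace ℤ_[p]]
    (μ : Measure ℤ_[p]) (x : ℕ → ℤ_[p]) (α : ℝ) (N : ℕ) (s : ℝ) : ℝ :=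
  (1 / (N : ℝ) ^ 2) * (1 / (μ (padicBall p 0 (s / (N : ℝ) ^ α))).toReal) *
    (pairCount p x N (s / (N : ℝ) ^ α) : ℝ)

/-- `x` has weak Poissonian pair correlations for `α` (w.r.t. the normalized Haar
measure `μ`) if `F_{N,α,p}(s) → 1` for all `s > 0`. -/
def HasWeakPPC (p : ℕ) [Fact p.Prime] [MeasurableSpace ℤ_[p]] (μ : Measure ℤ_[p])
    (x : ℕ → ℤ_[p]) (α : ℝ) : Prop :=
  ∀ s : ℝ, 0 < s → Tendsto (fun N : ℕ => pairF p μ x α N s) atTop (nhds 1)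

section Aux

variable (p : ℕ) [Fact p.Prime]

lemma measure_padicBall_aux [MeasurableSpace ℤ_[p]] [BorelSpace ℤ_[p]]
    (μ : Measure ℤ_[p]) [μ.IsAddHaarMeasure] [IsProbabilityMeasure μ] (k : ℕ) :
    (μ (padicBall p 0 ((p : ℝ) ^ (-(k : ℤ))))).toReal = (p : ℝ) ^ (-(k : ℤ)) := by
  have hp : 1 < p := (Fact.out : p.Prime).one_lt
  set c : ℝ := (p : ℝ) ^ (-(k : ℤ)) with hc
  set C : ℕ → Set ℤ_[p] := fun r => {y : ℤ_[p] | ‖y - (r : ℤ_[p])‖ ≤ c} with hCdef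
  have hball : padicBall p 0 c = C 0 := by
    ext y; simp [padicBall, C]
  have hmeasC : ∀ r : ℕ, MeasurableSet (C r) := fun r =>
    (isClosed_le (by continuity) continuous_const).measurableSet
  have hCμ : ∀ r : ℕ, μ (C r) = μ (C 0) := by
    intro r
    have hpre : C r = (fun y : ℤ_[p] => (-(r : ℤ_[p])) + y) ⁻¹' (C 0) := by
      ext y
      simp [C, Set.mem_setOf_eq, Set.mem_preimage, sub_zero, neg_add_eq_sub]
    rw [hpre, measure_preimage_add]
  have hcov : (Set.univ : Set ℤ_[p]) = ⋃ r ∈ Finset.range (p ^ k), C r := by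
    ext y
    simp only [Set.mem_univ, true_iff, Set.mem_iUnion, Finset.mem_range]
    exact ⟨y.appr k, y.appr_lt k,
      (PadicInt.norm_le_pow_iff_mem_span_pow _ k).mpr (y.appr_spec k)⟩
  have hdisj : (↑(Finset.range (p ^ k)) : Set ℕ).PairwiseDisjoint C := by
    intro r₁ hr₁ r₂ hr₂ hne
    simp only [Finset.coe_range, Set.mem_Iio] at hr₁ hr₂
    rw [Function.onFun, Set.disjoint_left]
    intro y hy₁ hy₂
    apply hne
    have h1 : ‖(r₁ : ℤ_[p]) - (r₂ : ℤ_[p])‖ ≤ c := by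
      have : (r₁ : ℤ_[p]) - (r₂ : ℤ_[p]) = (y - r₂) + -(y - r₁) := by ring
      rw [this]
      refine (PadicInt.nonarchimedean _ _).trans (max_le ?_ ?_)
      · exact hy₂
      · rw [norm_neg]; exact hy₁
    have h2 : ((p : ℤ) ^ k) ∣ ((r₁ : ℤ) - (r₂ : ℤ)) := by
      refine (PadicInt.norm_int_le_pow_iff_dvd (k := (r₁ : ℤ) - (r₂ : ℤ)) (n := k)).mp ?_
      push_cast
      exact h1
    have hr₁' : (r₁ : ℤ) < (p : ℤ) ^ k := by exact_mod_cast hr₁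
    have hr₂' : (r₂ : ℤ) < (p : ℤ) ^ k := by exact_mod_cast hr₂
    have h3 := Int.eq_zero_of_abs_lt_dvd h2 (by rw [abs_lt]; omega)
    omega
  have h1 : μ Set.univ = ∑ r ∈ Finset.range (p ^ k), μ (C r) := by
    rw [hcov]
    exact measure_biUnion_finset hdisj fun b _ => hmeasC b
  have h3 : ((p ^ k : ℕ) : ENNReal) * μ (C 0) = 1 := by
    have h2 : ∑ r ∈ Finset.range (p ^ k), μ (C r) = ((p ^ k : ℕ) : ENNReal) * μ (C 0) := by
      rw [Finset.sum_congr rfl fun r _ => hCμ r, Finset.sum_const, Finset.card_range,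
        nsmul_eq_mul]
    rw [← h2, ← h1, measure_univ]
  have hne0 : ((p ^ k : ℕ) : ENNReal) ≠ 0 := by
    exact Nat.cast_ne_zero.mpr (pow_ne_zero k (by omega))
  have hnetop : ((p ^ k : ℕ) : ENNReal) ≠ ⊤ := by simp
  have hμ : μ (C 0) = 1 / ((p ^ k : ℕ) : ENNReal) :=
    (ENNReal.eq_div_iff hne0 hnetop).mpr h3
  rw [hball, hμ]
  rw [ENNReal.toReal_div]
  simp only [ENNReal.toReal_one, ENNReal.toReal_natCast]
  rw [hc, zpow_neg, zpow_natCast, one_div]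
  norm_cast

lemma abs_le_padicDiscrepancy (x : ℕ → ℤ_[p]) (N : ℕ) (hN : 1 ≤ N) (z : ℤ_[p]) (k : ℕ) :
    |(((Finset.Icc 1 N).filter fun n =>
        x n ∈ padicBall p z ((p : ℝ) ^ (-(k : ℤ)))).card : ℝ) / N - (p : ℝ) ^ (-(k : ℤ))| ≤
      padicDiscrepancy p x N := by
  have hp : 1 < p := (Fact.out : p.Prime).one_lt
  have hN0 : (0 : ℝ) < N := by exact_mod_cast hN
  set f : ℤ_[p] → ℕ → ℝ := fun z k =>
    |(((Finset.Icc 1 N).filter fun n =>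
        x n ∈ padicBall p z ((p : ℝ) ^ (-(k : ℤ)))).card : ℝ) / N - (p : ℝ) ^ (-(k : ℤ))|
    with hf_def
  have hf : ∀ z k, f z k ≤ 1 := by
    intro z k
    have hcard : (((Finset.Icc 1 N).filter fun n =>
        x n ∈ padicBall p z ((p : ℝ) ^ (-(k : ℤ)))).card : ℝ) ≤ N := by
      have := Finset.card_filter_le (Finset.Icc 1 N)
        (fun n => x n ∈ padicBall p z ((p : ℝ) ^ (-(k : ℤ))))
      have hIcc : (Finset.Icc 1 N).card = N := by simp
      rw [hIcc] at this
      exact_mod_cast this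
    have ha0 : (0 : ℝ) ≤ (((Finset.Icc 1 N).filter fun n =>
        x n ∈ padicBall p z ((p : ℝ) ^ (-(k : ℤ)))).card : ℝ) / N := by positivity
    have ha1 : (((Finset.Icc 1 N).filter fun n =>
        x n ∈ padicBall p z ((p : ℝ) ^ (-(k : ℤ)))).card : ℝ) / N ≤ 1 := by
      rw [div_le_one hN0]; exact hcard
    have hb0 : (0 : ℝ) ≤ (p : ℝ) ^ (-(k : ℤ)) := by positivity
    have hb1 : (p : ℝ) ^ (-(k : ℤ)) ≤ 1 := by
      rw [zpow_neg, zpow_natCast]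
      apply inv_le_one_of_one_le₀
      exact one_le_pow₀ (by exact_mod_cast hp.le)
    rw [hf_def, abs_sub_le_iff]
    constructor <;> linarith
  have hbdd1 : ∀ z, BddAbove (Set.range fun k => f z k) := fun z =>
    ⟨1, by rintro _ ⟨k, rfl⟩; exact hf z k⟩
  have hg : ∀ z, (⨆ k, f z k) ≤ 1 := fun z => ciSup_le (hf z)
  have hbdd2 : BddAbove (Set.range fun z => ⨆ k, f z k) :=
    ⟨1, by rintro _ ⟨z, rfl⟩; exact hg z⟩
  calc f z k ≤ ⨆ k, f z k := le_ciSup (hbdd1 z) k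
    _ ≤ ⨆ z, ⨆ k, f z k := le_ciSup hbdd2 z
    _ = padicDiscrepancy p x N := rfl

end Aux

/-- For points `x_1, …, x_N ∈ ℤ_p` with p-adic discrepancy `D_N` and `0 < s ≤ 1`,
the normalized pair count of differences deviates from `μ(D_p(0,s))` by at most
`D_N + 2/N`. -/
theorem pairCount_deviation_le_discrepancy
    (p : ℕ) [Fact p.Prime] [MeasurableSpace ℤ_[p]] [BorelSpace ℤ_[p]]
    (μ : Measure ℤ_[p]) [μ.IsAddHaarMeasure] [IsProbabilityMeasure μ]
    (x : ℕ → ℤ_[p]) (N : ℕ) (hN : 1 ≤ N) (s : ℝ) (hs0 : 0 < s) (hs1 : s ≤ 1) :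
    |(pairCount p x N s : ℝ) / (N : ℝ) ^ 2 - (μ (padicBall p 0 s)).toReal| ≤
      padicDiscrepancy p x N + 2 / (N : ℝ) := by
  have hp : 1 < p := (Fact.out : p.Prime).one_lt
  have hp1 : (1 : ℝ) < (p : ℝ) := by exact_mod_cast hp
  have hN0 : (0 : ℝ) < N := by exact_mod_cast hN
  -- choose the canonical radius p^{-k}
  have hex : ∃ m : ℕ, (p : ℝ) ^ (-(m : ℤ)) ≤ s := by
    obtain ⟨n, hn⟩ := exists_pow_lt_of_lt_one hs0 (inv_lt_one_of_one_lt₀ hp1)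
    exact ⟨n, by rw [zpow_neg, zpow_natCast, ← inv_pow]; exact hn.le⟩
  set k : ℕ := Nat.find hex with hkdef
  have hk1 : (p : ℝ) ^ (-(k : ℤ)) ≤ s := Nat.find_spec hex
  have hk2 : ∀ m : ℕ, (p : ℝ) ^ (-(m : ℤ)) ≤ s → k ≤ m := fun m hm => Nat.find_min' hex hm
  set c : ℝ := (p : ℝ) ^ (-(k : ℤ)) with hc
  have hiff : ∀ y : ℤ_[p], ‖y‖ ≤ s ↔ ‖y‖ ≤ c := by
    intro y
    constructor
    · intro h
      rcases eq_or_ne y 0 with rfl | hy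
      · simp [hc]
      · rw [PadicInt.norm_eq_zpow_neg_valuation hy] at h ⊢
        have hkm : k ≤ y.valuation := hk2 _ h
        exact zpow_le_zpow_right₀ hp1.le (by omega)
    · intro h; exact h.trans hk1
  -- measure of the ball
  have hμball : (μ (padicBall p 0 s)).toReal = c := by
    have : padicBall p 0 s = padicBall p 0 c := by
      ext y; simp only [padicBall, Set.mem_setOf_eq, sub_zero]; exact hiff y
    rw [this, hc]
    exact measure_padicBall_aux p μ k
  set T : Finset ℕ := Finset.Icc 1 N with hT
  have hTcard : T.card = N := by simp [hT]
  set A : ℕ → ℕ := fun i => (T.filter fun j => x j ∈ padicBall p (x i) c).card with hA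
  have hAcond : ∀ i j : ℕ, (x j ∈ padicBall p (x i) c) ↔ ‖x i - x j‖ ≤ s := by
    intro i j
    rw [padicBall, Set.mem_setOf_eq, ← hiff, norm_sub_rev]
  have hmem : ∀ i ∈ T, i ∈ T.filter fun j => x j ∈ padicBall p (x i) c := by
    intro i hi
    rw [Finset.mem_filter]
    exact ⟨hi, by simp [padicBall]; positivity⟩
  have hA1 : ∀ i ∈ T, 1 ≤ A i := fun i hi => Finset.card_pos.mpr ⟨i, hmem i hi⟩
  -- counting identity
  have hpc : pairCount p x N s = ∑ i ∈ T, (A i - 1) := by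
    unfold pairCount
    rw [Finset.card_filter, Finset.sum_product]
    refine Finset.sum_congr rfl fun i hi => ?_
    rw [← Finset.card_filter]
    have heq : (T.filter fun j => i ≠ j ∧ ‖x i - x j‖ ≤ s)
        = (T.filter fun j => x j ∈ padicBall p (x i) c).erase i := by
      ext j
      simp only [Finset.mem_filter, Finset.mem_erase, hAcond i j]
      constructor
      · rintro ⟨hjT, hne, hle⟩; exact ⟨fun h => hne h.symm, hjT, hle⟩
      · rintro ⟨hne, hjT, hle⟩; exact ⟨hjT, fun h => hne h.symm, hle⟩
    rw [heq, Finset.card_erase_of_mem (hmem i hi)]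
  have hcast : (pairCount p x N s : ℝ) = (∑ i ∈ T, (A i : ℝ)) - N := by
    rw [hpc]
    rw [Nat.cast_sum,
      Finset.sum_congr rfl (fun i hi => (Nat.cast_sub (hA1 i hi) : ((A i - 1 : ℕ) : ℝ) = _)),
      Finset.sum_sub_distrib, Finset.sum_const, hTcard, nsmul_eq_mul]
    norm_num
  -- discrepancy bound per point
  have hkey : ∀ i ∈ T, |(A i : ℝ) / N - c| ≤ padicDiscrepancy p x N := by
    intro i _
    exact abs_le_padicDiscrepancy p x N hN (x i) k
  set D : ℝ := padicDiscrepancy p x N with hD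
  set S : ℝ := ∑ i ∈ T, ((A i : ℝ) / N - c) with hS
  have hSle : |S| ≤ N * D := by
    calc |S| ≤ ∑ i ∈ T, |(A i : ℝ) / N - c| := Finset.abs_sum_le_sum_abs _ _
      _ ≤ T.card • D := Finset.sum_le_card_nsmul _ _ D hkey
      _ = N * D := by rw [hTcard, nsmul_eq_mul]
  have heq2 : (pairCount p x N s : ℝ) / (N : ℝ) ^ 2 - c = (S - 1) / N := by
    rw [hcast, hS]
    rw [Finset.sum_sub_distrib, ← Finset.sum_div, Finset.sum_const, hTcard, nsmul_eq_mul]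
    field_simp
    ring
  rw [hμball, heq2]
  calc |(S - 1) / N| = |S - 1| / N := by rw [abs_div, abs_of_pos hN0]
    _ ≤ (|S| + 1) / N := by
        gcongr
        rw [sub_eq_add_neg]
        exact (abs_add_le _ _).trans (by norm_num)
    _ ≤ ((N : ℝ) * D + 1) / N := by gcongr
    _ ≤ D + 2 / N := by
        have h2 : D + 2 / N = ((N : ℝ) * D + 2) / N := by field_simp
        rw [h2]
        gcongr
        norm_num
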